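/- arXiv:2605.09155 — 3 statements merged into one kernel-verified Lean document; each statement's English description precedes it below -/
import Mathlib

section
/- Let k be a perfect field of positive characteristic p and let L ⊇ K be a purely inseparable finite extension of fields, each of transcendence degree 1 over k, with K containing an element t transcendental over k such that [K : k(t)] is finite. Then there exists m ∈ ℕ such that K = {x^{p^m} : x ∈ L} (i.e. the inclusion K ⊆ L is given by the m-th power relative Frobenius over k). -/
open Polynomial IntermediateField Cardinal

section Aux

/-- Transport of `Module.rank` from an abstract base field to a subfield realizing it. -/
private lemma rank_subfield_eq {X R₀ : Type*} [Field X] [Field R₀] [Algebra R₀ X]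
    (S : Subfield X) (hS : ∀ x, x ∈ S ↔ x ∈ Set.range (algebraMap R₀ X)) :
    Module.rank ↥S X = Module.rank R₀ X := by
  have hmem : ∀ x : R₀, algebraMap R₀ X x ∈ S := fun x => (hS _).2 ⟨x, rfl⟩
  let g : R₀ →+* ↥S := (algebraMap R₀ X).codRestrict S hmem
  have hg : Function.Bijective g := by
    constructor
    · intro a b hab
      exact (algebraMap R₀ X).injective (congrArg Subtype.val hab)
    · rintro ⟨y, hy⟩
      obtain ⟨a, rfl⟩ := (hS y).1 hy
      exact ⟨a, rfl⟩
  refine (rank_eq_of_equiv_equiv (R := R₀) (M := X) (R' := ↥S) (M₁ := X)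
    g (AddEquiv.refl X) hg (fun r m => ?_)).symm
  show r • m = g r • m
  rw [Algebra.smul_def, Algebra.smul_def]
  rfl

private lemma subfield_map_closure {X Y : Type*} [Field X] [Field Y] (f : X →+* Y) (s : Set X) :
    (Subfield.closure s).map f = Subfield.closure (f '' s) := by
  refine le_antisymm ((Subfield.gc_map_comap f).l_le ?_) (Subfield.closure_le.2 ?_)
  · rw [Subfield.closure_le]
    intro x hx
    exact Subfield.subset_closure (Set.mem_image_of_mem f hx)
  · rintro y ⟨x, hx, rfl⟩
    exact Subfield.mem_map.2 ⟨x, Subfield.subset_closure hx, rfl⟩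

private lemma aux_le_of_relfinrank_one {X : Type*} [Field X] {A B : Subfield X}
    (hAB : A ≤ B) (h : Subfield.relfinrank A B = 1) : B ≤ A := by
  rw [Subfield.relfinrank_eq_finrank_of_le hAB] at h
  have hbot := IntermediateField.finrank_eq_one_iff.1 h
  intro x hx
  have hx' : x ∈ Subfield.extendScalars hAB := (Subfield.mem_extendScalars _).2 hx
  rw [hbot] at hx'
  obtain ⟨y, rfl⟩ := IntermediateField.mem_bot.1 hx'
  exact y.2

end Aux

/-- Let `k` be a perfect field of positive characteristic `p` and `L ⊇ K` a
purely inseparable finite extension of fields, each of transcendence degree 1 over `k`, with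
`K` containing an element `t` transcendental over `k` such that `[K : k(t)]` is finite.
Then there exists `m : ℕ` such that `K = {x ^ p ^ m : x ∈ L}`, i.e. the inclusion `K ⊆ L`
is given by the `m`-th power relative Frobenius over `k`. -/
theorem stmt2 (p : ℕ) (hp : p.Prime)
    (k K L : Type*) [Field k] [Field K] [Field L]
    [Algebra k K] [Algebra K L] [Algebra k L] [IsScalarTower k K L]
    [CharP k p] [PerfectField k]
    [IsPurelyInseparable K L] [FiniteDimensional K L]
    (t : K) (ht : Transcendental k t)
    (hfin : FiniteDimensional (IntermediateField.adjoin k {t}) K) :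
    ∃ m : ℕ, Set.range (algebraMap K L) = Set.range (fun x : L => x ^ p ^ m) := by
  classical
  haveI : CharP K p := charP_of_injective_algebraMap (algebraMap k K).injective p
  haveI : CharP L p := charP_of_injective_algebraMap (algebraMap k L).injective p
  haveI : ExpChar k p := .prime hp
  haveI : ExpChar K p := .prime hp
  haveI : ExpChar L p := .prime hp
  have hpinj : Function.Injective (frobenius L p) := frobenius_inj L p
  -- Notation
  set τ : L := algebraMap K L t with hτdef
  set KL : Subfield L := (algebraMap K L).fieldRange with hKLdef
  set Fr : ℕ → Subfield L := fun n => (iterateFrobenius L p n).fieldRange with hFrdef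
  -- basic facts about the Frobenius tower
  have hFrmem : ∀ (n : ℕ) (x : L), x ∈ Fr n ↔ ∃ y : L, y ^ p ^ n = x := by
    intro n x
    simp [hFrdef, RingHom.mem_fieldRange, iterateFrobenius_def]
  have hFrmap : ∀ b a : ℕ, (Fr a).map (iterateFrobenius L p b) = Fr (b + a) := by
    intro b a
    rw [hFrdef]
    simp only
    rw [RingHom.fieldRange_eq_map, RingHom.fieldRange_eq_map, Subfield.map_map,
      ← iterateFrobenius_add]
  have hFranti : ∀ {a b : ℕ}, a ≤ b → Fr b ≤ Fr a := by
    intro a b hab x hx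
    obtain ⟨y, hy⟩ := (hFrmem b x).1 hx
    refine (hFrmem a x).2 ⟨y ^ p ^ (b - a), ?_⟩
    rw [← pow_mul, ← pow_add, Nat.sub_add_cancel hab, hy]
  have hFr0 : Fr 0 = ⊤ := by
    rw [eq_top_iff]
    intro x _
    exact (hFrmem 0 x).2 ⟨x, by simp⟩
  have hmapKL : ∀ b : ℕ, KL.map (iterateFrobenius L p b) ≤ KL := by
    intro b y hy
    rw [Subfield.mem_map] at hy
    obtain ⟨x, hx, rfl⟩ := hy
    obtain ⟨u, rfl⟩ := hx
    exact ⟨u ^ p ^ b, by rw [map_pow]; rfl⟩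
  -- transcendence of τ over k
  have hτtr : Transcendental k τ := by
    intro hal
    exact ht ((isAlgebraic_algebraMap_iff (algebraMap K L).injective).1 hal)
  -- τ is not in k(τ^p)
  have hτnot : τ ∉ IntermediateField.adjoin k {τ ^ p} := by
    intro hmem
    rw [IntermediateField.mem_adjoin_simple_iff] at hmem
    obtain ⟨r, s, hrs⟩ := hmem
    by_cases hs : (Polynomial.aeval (τ ^ p)) s = 0
    · rw [hs, div_zero] at hrs
      exact hτtr (hrs ▸ isAlgebraic_zero)
    have hs0 : s ≠ 0 := fun h => hs (by simp [h])
    rw [eq_div_iff hs] at hrs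
    have key : (Polynomial.aeval τ) (X * Polynomial.expand k p s - Polynomial.expand k p r) = 0 := by
      rw [map_sub, map_mul, aeval_X, Polynomial.expand_aeval, Polynomial.expand_aeval, hrs,
        sub_self]
    have hpoly : X * Polynomial.expand k p s - Polynomial.expand k p r = 0 := by
      by_contra h0
      exact hτtr ⟨_, h0, key⟩
    rw [sub_eq_zero] at hpoly
    have hses : Polynomial.expand k p s ≠ 0 := by
      intro h
      rw [Polynomial.expand_eq_zero hp.pos] at h
      exact hs0 h
    have hr0 : r ≠ 0 := by
      rintro rfl
      rw [map_zero, mul_eq_zero] at hpoly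
      rcases hpoly with h | h
      · exact X_ne_zero h
      · exact hses h
    have hdeg := congrArg Polynomial.natDegree hpoly
    rw [Polynomial.natDegree_mul X_ne_zero hses, Polynomial.natDegree_X,
      Polynomial.natDegree_expand, Polynomial.natDegree_expand] at hdeg
    have hd1 : p ∣ s.natDegree * p := dvd_mul_left p s.natDegree
    have hd2 : p ∣ r.natDegree * p := dvd_mul_left p r.natDegree
    have : p ∣ 1 := by
      have h1 : r.natDegree * p - s.natDegree * p = 1 := by omega
      exact h1 ▸ Nat.dvd_sub hd2 hd1
    exact hp.one_lt.ne' (Nat.dvd_one.1 this)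
  -- the subfields E = k(τ) and C = E^p
  set ELs : Subfield L := (IntermediateField.adjoin k {τ}).toSubfield with hELdef
  set Cs : Subfield L := ELs.map (frobenius L p) with hCdef
  have hτEL : τ ∈ ELs := (mem_toSubfield _ _).2 (mem_adjoin_simple_self k τ)
  have hCsEL : Cs ≤ ELs := by
    rintro x hx
    rw [hCdef, Subfield.mem_map] at hx
    obtain ⟨y, hy, rfl⟩ := hx
    show y ^ p ∈ ELs
    exact pow_mem hy p
  have hCsub : Cs ≤ (IntermediateField.adjoin k {τ ^ p}).toSubfield := by
    rw [hCdef, hELdef, IntermediateField.adjoin_toSubfield, subfield_map_closure,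
      Subfield.closure_le]
    rintro y ⟨x, hx, rfl⟩
    rcases hx with ⟨c, rfl⟩ | hx
    · exact pow_mem (IntermediateField.algebraMap_mem (IntermediateField.adjoin k {τ ^ p}) c) p
    · rcases hx with rfl
      exact mem_adjoin_simple_self k (τ ^ p)
  have hτCs : τ ∉ Cs := fun h => hτnot ((mem_toSubfield _ _).1 (hCsub h))
  have hCsF1 : Cs ≤ Fr 1 := by
    rintro x hx
    rw [hCdef, Subfield.mem_map] at hx
    obtain ⟨y, _, rfl⟩ := hx
    exact (hFrmem 1 _).2 ⟨y, by rw [pow_one]; rfl⟩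
  -- identification of the extension E / C with a simple adjunction
  have hEXT : Subfield.extendScalars hCsEL = IntermediateField.adjoin ↥Cs {τ} := by
    apply le_antisymm
    · rw [Subfield.extendScalars_le_iff, hELdef, IntermediateField.adjoin_toSubfield,
        Subfield.closure_le]
      rintro x (⟨c, rfl⟩ | hx)
      · obtain ⟨d, hd⟩ := surjective_frobenius k p c
        have hmem : algebraMap k L c ∈ Cs := by
          refine Subfield.mem_map.2 ⟨algebraMap k L d, ?_, ?_⟩
          · rw [hELdef, mem_toSubfield]
            exact IntermediateField.algebraMap_mem _ _
          · show (algebraMap k L d) ^ p = algebraMap k L c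
            rw [← map_pow, ← hd]
            rfl
        exact IntermediateField.algebraMap_mem (IntermediateField.adjoin ↥Cs {τ}) ⟨_, hmem⟩
      · rcases hx with rfl
        exact mem_adjoin_simple_self ↥Cs τ
    · rw [IntermediateField.adjoin_le_iff]
      intro x hx
      rcases hx with rfl
      exact (Subfield.mem_extendScalars _).2 hτEL
  -- the minimal polynomial of τ over C is X^p - τ^p
  have hτpCs : τ ^ p ∈ Cs := Subfield.mem_map.2 ⟨τ, hτEL, rfl⟩
  have hirr : Irreducible (X ^ p - C (⟨τ ^ p, hτpCs⟩ : ↥Cs) : Polynomial ↥Cs) := by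
    apply X_pow_sub_C_irreducible_of_prime hp
    intro b hb
    apply hτCs
    have hbL : (b : L) ^ p = τ ^ p := congrArg Subtype.val hb
    have hbτ : (b : L) = τ := hpinj hbL
    exact hbτ ▸ b.2
  have haev : (Polynomial.aeval τ) (X ^ p - C (⟨τ ^ p, hτpCs⟩ : ↥Cs)) = 0 := by
    rw [map_sub, map_pow, aeval_X, aeval_C]
    exact sub_self _
  have hmin : minpoly ↥Cs τ = X ^ p - C (⟨τ ^ p, hτpCs⟩ : ↥Cs) :=
    (minpoly.eq_of_irreducible_of_monic hirr haev
      (monic_X_pow_sub_C _ hp.ne_zero)).symm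
  have hInt : IsIntegral ↥Cs τ :=
    ⟨X ^ p - C (⟨τ ^ p, hτpCs⟩ : ↥Cs), monic_X_pow_sub_C _ hp.ne_zero, by
      rw [← Polynomial.aeval_def]; exact haev⟩
  have hdeg : Subfield.relfinrank Cs ELs = p := by
    rw [Subfield.relfinrank_eq_finrank_of_le hCsEL, hEXT,
      IntermediateField.adjoin.finrank hInt, hmin, natDegree_X_pow_sub_C]
  -- finiteness of [L : E]
  have hELKL : ELs ≤ KL := by
    rw [hELdef, IntermediateField.adjoin_toSubfield, Subfield.closure_le]
    rintro x (⟨c, rfl⟩ | hx)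
    · rw [IsScalarTower.algebraMap_eq k K L]
      exact ⟨algebraMap k K c, rfl⟩
    · rcases hx with rfl
      exact ⟨t, rfl⟩
  have hELmap : ((IntermediateField.adjoin k {t}).toSubfield.map (algebraMap K L)) = ELs := by
    rw [IntermediateField.adjoin_toSubfield, subfield_map_closure, hELdef,
      IntermediateField.adjoin_toSubfield]
    congr 1
    rw [Set.image_union, Set.image_singleton]
    congr 1
    rw [IsScalarTower.algebraMap_eq k K L]
    ext y
    simp [Set.range_comp]
  have hrankEL : Module.rank ↥ELs L < ℵ₀ := by
    have h1 : Subfield.relrank ELs KL < ℵ₀ := by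
      have hle := Subfield.lift_relrank_map_map (IntermediateField.adjoin k {t}).toSubfield
        (⊤ : Subfield K) (algebraMap K L)
      rw [hELmap, ← RingHom.fieldRange_eq_map, ← hKLdef] at hle
      have h2 : Subfield.relrank (IntermediateField.adjoin k {t}).toSubfield (⊤ : Subfield K)
          < ℵ₀ := by
        rw [Subfield.relrank_top_right]
        rw [rank_subfield_eq (R₀ := ↥(IntermediateField.adjoin k {t}))
          (IntermediateField.adjoin k {t}).toSubfield ?_]
        · exact Module.rank_lt_aleph0_iff.2 hfin
        · intro x
          constructor
          · intro hx
            exact ⟨⟨x, (mem_toSubfield _ _).1 hx⟩, rfl⟩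
          · rintro ⟨y, rfl⟩
            exact (mem_toSubfield _ _).2 y.2
      rw [← Cardinal.lift_lt_aleph0 (c := Subfield.relrank ELs KL), hle]
      exact Cardinal.lift_lt_aleph0.2 h2
    have h2 : Subfield.relrank KL ⊤ < ℵ₀ := by
      rw [Subfield.relrank_top_right]
      rw [rank_subfield_eq (R₀ := K) KL (fun x => Iff.rfl)]
      exact Module.rank_lt_aleph0_iff.2 ‹FiniteDimensional K L›
    have h3 := Subfield.relrank_mul_relrank hELKL (le_top : KL ≤ ⊤)
    have h4 : Subfield.relrank ELs ⊤ < ℵ₀ := by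
      rw [← h3]
      exact Cardinal.mul_lt_aleph0 h1 h2
    rwa [Subfield.relrank_top_right] at h4
  have ha_pos : 0 < Subfield.relfinrank ELs ⊤ := by
    rw [Subfield.relfinrank_eq_toNat_relrank, Cardinal.toNat_pos, Subfield.relrank_top_right]
    exact ⟨(rank_pos (R := ↥ELs) (M := L)).ne', hrankEL⟩
  -- the key degree computation : [L : L^p] = p
  have hkey : Subfield.relfinrank (Fr 1) ⊤ = p := by
    have h1 : Subfield.relfinrank Cs (Fr 1) = Subfield.relfinrank ELs ⊤ := by
      have := Subfield.relfinrank_map_map ELs (⊤ : Subfield L) (frobenius L p)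
      rwa [← hCdef, ← RingHom.fieldRange_eq_map, ← iterateFrobenius_one (R := L) p] at this
    have h2 := Subfield.relfinrank_mul_relfinrank hCsF1 (le_top : Fr 1 ≤ ⊤)
    have h3 := Subfield.relfinrank_mul_relfinrank hCsEL (le_top : ELs ≤ ⊤)
    rw [hdeg] at h3
    rw [h1] at h2
    have heq : Subfield.relfinrank ELs ⊤ * Subfield.relfinrank (Fr 1) ⊤
        = Subfield.relfinrank ELs ⊤ * p := by
      rw [h2, ← h3, mul_comm]
    exact Nat.eq_of_mul_eq_mul_left ha_pos heq
  -- dichotomy for subfields containing L^p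
  have hdich0 : ∀ S : Subfield L, Fr 1 ≤ S → S = Fr 1 ∨ S = ⊤ := by
    intro S hS
    have hmul := Subfield.relfinrank_mul_relfinrank hS (le_top : S ≤ ⊤)
    rw [hkey] at hmul
    rcases hp.eq_one_or_self_of_dvd (Subfield.relfinrank (Fr 1) S) ⟨_, hmul.symm⟩ with h | h
    · exact Or.inl (le_antisymm (aux_le_of_relfinrank_one hS h) hS)
    · right
      have hz : Subfield.relfinrank S ⊤ = 1 := by
        refine Nat.eq_of_mul_eq_mul_left hp.pos ?_
        rw [← h, hmul, h, mul_one]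
      exact top_le_iff.1 (aux_le_of_relfinrank_one le_top hz)
  -- dichotomy at level n
  have hdichn : ∀ (n : ℕ) (S : Subfield L), Fr (n + 1) ≤ S → S ≤ Fr n →
      S = Fr (n + 1) ∨ S = Fr n := by
    intro n S h1 h2
    have hS' : Fr 1 ≤ S.comap (iterateFrobenius L p n) := by
      intro x hx
      obtain ⟨y, hy⟩ := (hFrmem 1 x).1 hx
      show iterateFrobenius L p n x ∈ S
      apply h1
      refine (hFrmem (n + 1) _).2 ⟨y, ?_⟩
      rw [← hy]
      show y ^ p ^ (n + 1) = (y ^ p ^ 1) ^ p ^ n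
      rw [← pow_mul, ← pow_add, Nat.add_comm 1 n]
    have hrec : (S.comap (iterateFrobenius L p n)).map (iterateFrobenius L p n) = S := by
      apply Subfield.map_comap_eq_self
      exact h2
    rcases hdich0 _ hS' with h | h
    · left
      rw [← hrec, h, hFrmap]
    · right
      rw [← hrec, h, ← hFr0, hFrmap, Nat.add_zero]
  -- uniform exponent : L^{p^e} ⊆ K
  obtain ⟨e, he⟩ : ∃ e : ℕ, ∀ x : L, x ^ p ^ e ∈ KL := by
    refine ⟨Module.finrank K L, fun x => ?_⟩
    obtain ⟨n, y, hxy⟩ := IsPurelyInseparable.minpoly_eq_X_pow_sub_C K p x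
    have hroot : x ^ p ^ n = algebraMap K L y := by
      have h0 := minpoly.aeval K x
      rw [hxy, map_sub, map_pow, aeval_X, aeval_C, sub_eq_zero] at h0
      exact h0
    have hle : p ^ n ≤ Module.finrank K L := by
      have hnd := minpoly.natDegree_le (A := K) x
      rwa [hxy, natDegree_X_pow_sub_C] at hnd
    have hne : n ≤ Module.finrank K L := by
      by_contra hgt
      push_neg at hgt
      have h1 : p ^ Module.finrank K L < p ^ n := Nat.pow_lt_pow_right hp.one_lt hgt
      have h2 : Module.finrank K L < p ^ Module.finrank K L :=
        Nat.lt_pow_self (n := Module.finrank K L) hp.one_lt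
      omega
    refine ⟨y ^ p ^ (Module.finrank K L - n), ?_⟩
    rw [map_pow, ← hroot, ← pow_mul, ← pow_add, Nat.add_sub_cancel' hne]
  have hFeKL : Fr e ≤ KL := by
    intro x hx
    obtain ⟨y, hy⟩ := (hFrmem e x).1 hx
    exact hy ▸ he y
  -- KL is not contained in F (e+1)
  have hnotKL : ¬ KL ≤ Fr (e + 1) := by
    intro hco
    have hF1top : Fr 1 = ⊤ := by
      rw [eq_top_iff]
      intro x _
      have hx : x ^ p ^ e ∈ Fr (e + 1) := hco (he x)
      obtain ⟨y, hy⟩ := (hFrmem (e + 1) _).1 hx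
      refine (hFrmem 1 x).2 ⟨y, ?_⟩
      apply (iterateFrobenius L p e).injective
      show (y ^ p ^ 1) ^ p ^ e = x ^ p ^ e
      rw [← pow_mul, ← pow_add, Nat.add_comm 1 e]
      exact hy
    rw [hF1top, Subfield.relfinrank_self] at hkey
    exact hp.one_lt.ne' hkey.symm
  -- the largest m with KL ⊆ F m
  set P : ℕ → Prop := fun m => KL ≤ Fr m with hPdef
  have hP0 : P 0 := by rw [hPdef]; simp only; rw [hFr0]; exact le_top
  set m := Nat.findGreatest P e with hmdef
  have hPm : P m := Nat.findGreatest_spec (Nat.zero_le e) hP0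
  have hnot : ¬ P (m + 1) := by
    by_cases hme : m + 1 ≤ e
    · exact Nat.findGreatest_is_greatest (Nat.lt_succ_self m) hme
    · have hm_e : m = e := le_antisymm (Nat.findGreatest_le e) (by omega)
      rw [hm_e]
      exact hnotKL
  -- KL ⊔ F (m+1) = F m
  have hsup : KL ⊔ Fr (m + 1) = Fr m := by
    rcases hdichn m (KL ⊔ Fr (m + 1)) le_sup_right
        (sup_le hPm (hFranti (Nat.le_succ m))) with h | h
    · exact absurd (le_sup_left.trans h.le) hnot
    · exact h
  -- the chain argument
  have hchain : ∀ j : ℕ, Fr m ≤ KL ⊔ Fr (m + 1 + j) := by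
    intro j
    induction j with
    | zero => rw [Nat.add_zero]; exact hsup.ge
    | succ j ih =>
      have hstep : Fr (m + 1 + j) ≤ KL ⊔ Fr (m + 1 + (j + 1)) := by
        have h1 : Fr (m + 1 + j) = (Fr m).map (iterateFrobenius L p (j + 1)) := by
          rw [hFrmap]; congr 1; omega
        rw [h1, ← hsup, Subfield.map_sup]
        refine sup_le_sup (hmapKL _) ?_
        rw [hFrmap]
        apply le_of_eq
        congr 1
        omega
      calc Fr m ≤ KL ⊔ Fr (m + 1 + j) := ih
        _ ≤ KL ⊔ (KL ⊔ Fr (m + 1 + (j + 1))) := sup_le_sup_left hstep KL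
        _ = KL ⊔ Fr (m + 1 + (j + 1)) := by rw [← sup_assoc, sup_idem]
  have hKLFm : KL = Fr m := by
    apply le_antisymm hPm
    have h1 := hchain e
    have h2 : Fr (m + 1 + e) ≤ KL := (hFranti (by omega : e ≤ m + 1 + e)).trans hFeKL
    exact h1.trans (sup_le le_rfl h2)
  -- conclusion
  refine ⟨m, ?_⟩
  have hset : Set.range (algebraMap K L) = (KL : Set L) := by
    rw [hKLdef, RingHom.coe_fieldRange]
  rw [hset, hKLFm]
  ext x
  simp only [hFrdef, RingHom.coe_fieldRange, Set.mem_range, SetLike.mem_coe]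
  constructor
  · rintro ⟨y, rfl⟩
    exact ⟨y, rfl⟩
  · rintro ⟨y, rfl⟩
    exact ⟨y, rfl⟩
end

section
/- In the setting of the previous lemma: if [L : K] = p^n, then [K^{1/p^n} : K] = p^n, where K^{1/p^n} denotes the field of p^n-th roots of elements of K inside a fixed algebraic closure containing L. -/
open IntermediateField Polynomial

/-- A transcendental element `u` is not in `k(u^m)` for `m ≥ 2`. -/
lemma aux_not_mem {k Ω : Type*} [Field k] [Field Ω] [Algebra k Ω] {u : Ω}
    (hu : Transcendental k u) {m : ℕ} (hm : 2 ≤ m) :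
    u ∉ IntermediateField.adjoin k {u ^ m} := by
  intro h
  rw [mem_adjoin_simple_iff] at h
  obtain ⟨r, s, h⟩ := h
  have hu0 : u ≠ 0 := fun h0 => hu (h0 ▸ isAlgebraic_zero)
  have hum : Transcendental k (u ^ m) := hu.pow (by omega)
  have hsval : aeval (u ^ m) s ≠ 0 := by
    intro h0
    have hs0 : s = 0 := by
      by_contra hs0
      exact hum ⟨s, hs0, h0⟩
    rw [hs0, map_zero, div_zero] at h
    exact hu0 h
  rw [eq_div_iff hsval] at h
  have key : aeval u (X * s.comp (X ^ m) - r.comp (X ^ m)) = 0 := by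
    simp only [map_sub, map_mul, aeval_comp, aeval_X_pow, aeval_X]
    rw [h]; ring
  have hP : X * s.comp (X ^ m) - r.comp (X ^ m) = 0 := by
    by_contra hP
    exact hu ⟨_, hP, key⟩
  have hscomp : s.comp (X ^ m) ≠ 0 := by
    intro h0
    apply hsval
    have := congrArg (aeval u) h0
    simpa [aeval_comp] using this
  have heq : X * s.comp (X ^ m) = r.comp (X ^ m) := sub_eq_zero.mp hP
  have hrcomp : r.comp (X ^ m) ≠ 0 := by
    rw [← heq]
    exact mul_ne_zero X_ne_zero hscomp
  have hd := congrArg natDegree heq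
  rw [natDegree_mul X_ne_zero hscomp, natDegree_X, natDegree_comp, natDegree_comp,
    natDegree_X_pow] at hd
  -- hd : 1 + s.natDegree * m = r.natDegree * m
  have h1 : (1 + s.natDegree * m) % m = 1 := by
    rw [Nat.add_mul_mod_self_right]
    exact Nat.one_mod_eq_one.mpr (by omega)
  rw [hd, Nat.mul_mod_left] at h1
  exact absurd h1 (by omega)

/-- Degree-`p` step: `[k(u) : k(u^p)] = p` for transcendental `u` in char `p`. -/
lemma aux_step {k Ω : Type*} [Field k] [Field Ω] [Algebra k Ω] (p : ℕ) (hp : Fact p.Prime)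
    [CharP Ω p] {u : Ω} (hu : Transcendental k u) :
    IntermediateField.relfinrank (adjoin k {u ^ p}) (adjoin k {u}) = p := by
  have hle : adjoin k {u ^ p} ≤ adjoin k {u} :=
    adjoin_le_iff.2 (by
      simpa using pow_mem (mem_adjoin_simple_self k u) p)
  rw [relfinrank_eq_finrank_of_le hle, extendScalars_adjoin hle]
  set T := adjoin k {u ^ p} with hT
  set a : T := ⟨u ^ p, mem_adjoin_simple_self k (u ^ p)⟩ with ha
  have haval : algebraMap T Ω a = u ^ p := rfl
  have heval : aeval u (X ^ p - C a) = 0 := by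
    simp [haval]
  have hmon : (X ^ p - C a).Monic := monic_X_pow_sub_C a hp.out.ne_zero
  have hint : IsIntegral T u := ⟨X ^ p - C a, hmon, heval⟩
  have hirr : Irreducible (X ^ p - C a) := by
    apply X_pow_sub_C_irreducible_of_prime hp.out
    intro b hb
    have hb' : (b : Ω) ^ p = u ^ p := by
      have := congrArg (algebraMap T Ω) hb
      rw [map_pow] at this
      exact this.trans haval
    have hbu : (b : Ω) = u := by
      haveI : ExpChar Ω p := ExpChar.prime hp.out
      exact frobenius_inj Ω p hb'
    have h2 := b.2
    rw [hbu] at h2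
    exact aux_not_mem hu hp.out.two_le h2
  rw [adjoin.finrank hint, ← minpoly.eq_of_irreducible_of_monic hirr heval hmon,
    natDegree_X_pow_sub_C]

lemma aux_pow {k Ω : Type*} [Field k] [Field Ω] [Algebra k Ω] (p : ℕ) (hp : Fact p.Prime)
    [CharP Ω p] {u : Ω} (hu : Transcendental k u) :
    ∀ m : ℕ, IntermediateField.relfinrank (adjoin k {u ^ p ^ m}) (adjoin k {u}) = p ^ m
  | 0 => by
    rw [pow_zero, pow_one, relfinrank_self]
  | (m + 1) => by
    have hppos : 0 < p ^ m := pow_pos hp.out.pos m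
    have hum : Transcendental k (u ^ p ^ m) := hu.pow hppos
    have h1 : adjoin k {u ^ p ^ (m + 1)} ≤ adjoin k {u ^ p ^ m} := by
      apply adjoin_le_iff.2
      have : u ^ p ^ (m + 1) = (u ^ p ^ m) ^ p := by
        rw [← pow_mul, pow_succ]
      simpa [this] using pow_mem (mem_adjoin_simple_self k (u ^ p ^ m)) p
    have h2 : adjoin k {u ^ p ^ m} ≤ adjoin k {u} := by
      apply adjoin_le_iff.2
      simpa using pow_mem (mem_adjoin_simple_self k u) (p ^ m)
    rw [← relfinrank_mul_relfinrank h1 h2]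
    have e1 : IntermediateField.relfinrank (adjoin k {u ^ p ^ (m + 1)}) (adjoin k {u ^ p ^ m}) = p := by
      have : u ^ p ^ (m + 1) = (u ^ p ^ m) ^ p := by rw [← pow_mul, pow_succ]
      rw [this]
      exact aux_step p hp hum
    rw [e1, aux_pow p hp hu m, pow_succ']



/-- In the setting of the purely inseparable lemma: `k` is a perfect field of
characteristic `p > 0`, `K` has transcendence degree 1 over `k` (it contains a transcendental
element `t` with `[K : k(t)]` finite), `L/K` is a finite purely inseparable extension with
`[L : K] = p ^ n`, and `Ω` is a fixed algebraic closure of `L` (hence of `K`).  Then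
`[K^{1/pⁿ} : K] = p ^ n`, where `K^{1/pⁿ} ⊆ Ω` is the field of `pⁿ`-th roots of elements
of `K`. -/
theorem stmt3 (p n : ℕ) (hp : Fact p.Prime)
    (k K L Ω : Type*) [Field k] [Field K] [Field L] [Field Ω]
    [Algebra k K] [Algebra K L] [Algebra k L] [IsScalarTower k K L]
    [Algebra K Ω] [Algebra L Ω] [IsScalarTower K L Ω] [IsAlgClosure L Ω]
    [CharP k p] [CharP Ω p] [PerfectField k]
    [IsPurelyInseparable K L] [FiniteDimensional K L]
    (t : K) (ht : Transcendental k t)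
    (hKfin : FiniteDimensional (IntermediateField.adjoin k {t}) K)
    (hdeg : Module.finrank K L = p ^ n)
    (Kroot : IntermediateField K Ω)
    (hKroot : ∀ x : Ω, x ∈ Kroot ↔ x ^ p ^ n ∈ Set.range (algebraMap K Ω)) :
    Module.finrank K Kroot = p ^ n := by
  classical
  letI : Algebra k Ω := ((algebraMap K Ω).comp (algebraMap k K)).toAlgebra
  haveI : IsScalarTower k K Ω := IsScalarTower.of_algebraMap_eq fun x => rfl
  haveI : ExpChar Ω p := ExpChar.prime hp.out
  haveI : ExpChar k p := ExpChar.prime hp.out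
  haveI : PerfectRing k p := inferInstance
  haveI : IsAlgClosed Ω := IsAlgClosure.isAlgClosed L
  haveI : PerfectRing Ω p := inferInstance
  set ι : K →+* Ω := algebraMap K Ω with hι
  set ιa : K →ₐ[k] Ω := IsScalarTower.toAlgHom k K Ω with hιa
  set τ : Ω := algebraMap K Ω t with hτ
  -- transcendence of τ
  have hτtr : Transcendental k τ := by
    intro hτa
    apply ht
    obtain ⟨q, hq0, hq⟩ := hτa
    refine ⟨q, hq0, ?_⟩
    have h1 : ι (Polynomial.aeval t q) = 0 := by
      rw [← hq]
      exact (Polynomial.aeval_algHom_apply ιa t q).symm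
    exact (_root_.map_eq_zero ι).1 h1
  -- choose a p^n-th root of τ
  obtain ⟨s, hs⟩ : ∃ s : Ω, s ^ p ^ n = τ :=
    IsAlgClosed.exists_pow_nat_eq τ (pow_pos hp.out.pos n)
  have hstr : Transcendental k s := by
    intro hsa
    exact hτtr (hs ▸ (hsa.isIntegral.pow (p ^ n)).isAlgebraic)
  set F : IntermediateField k K := IntermediateField.adjoin k {t} with hF
  set T : IntermediateField k Ω := IntermediateField.adjoin k {τ} with hT
  set S : IntermediateField k Ω := IntermediateField.adjoin k {s} with hS
  set A : IntermediateField k Ω := ιa.fieldRange with hA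
  set B : IntermediateField k Ω := Kroot.restrictScalars k with hB
  -- basic inclusions
  have hTA : T ≤ A := by
    apply IntermediateField.adjoin_le_iff.2
    intro x hx
    rw [Set.mem_singleton_iff] at hx
    exact hx ▸ ⟨t, rfl⟩
  have hAB : A ≤ B := by
    rintro x ⟨y, rfl⟩
    show ιa y ∈ Kroot
    exact (hKroot _).2 ⟨y ^ p ^ n, by rw [map_pow]; rfl⟩
  have hsB : s ∈ Kroot := (hKroot s).2 ⟨t, by rw [hs]⟩
  have hTS : T ≤ S := by
    apply IntermediateField.adjoin_le_iff.2
    intro x hx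
    rw [Set.mem_singleton_iff] at hx
    exact hx ▸ hs ▸ pow_mem (IntermediateField.mem_adjoin_simple_self k s) (p ^ n)
  have hSB : S ≤ B := by
    apply IntermediateField.adjoin_le_iff.2
    intro x hx
    rw [Set.mem_singleton_iff] at hx
    exact hx ▸ hsB
  -- E2 : finrank K Kroot = relfinrank A B
  have hAbot : A.toSubfield = (⊥ : IntermediateField K Ω).toSubfield := by
    ext x
    simp only [IntermediateField.mem_toSubfield, IntermediateField.mem_bot]
    constructor
    · rintro ⟨y, rfl⟩; exact ⟨y, rfl⟩
    · rintro ⟨y, rfl⟩; exact ⟨y, rfl⟩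
  have hBKroot : B.toSubfield = Kroot.toSubfield := rfl
  have e2 : Subfield.relfinrank A.toSubfield B.toSubfield = Module.finrank K Kroot := by
    rw [hAbot, hBKroot]
    exact IntermediateField.relfinrank_bot_left Kroot
  -- E1 : relfinrank T A = finrank F K
  have e1 : IntermediateField.relfinrank T A = Module.finrank F K := by
    have h1 : F.map ιa = T := by
      rw [hF, IntermediateField.adjoin_map, Set.image_singleton]
      rfl
    have h2 : (⊤ : IntermediateField k K).map ιa = A := (AlgHom.fieldRange_eq_map ιa).symm
    rw [← h1, ← h2, IntermediateField.relfinrank_map_map, IntermediateField.relfinrank_top_right]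
  -- E3 : Frobenius transport
  set ψ : Ω ≃+* Ω := iterateFrobeniusEquiv Ω p n with hψdef
  have hψ : ∀ x : Ω, ψ x = x ^ p ^ n := fun x => iterateFrobeniusEquiv_def Ω p n x
  have hmapS : S.toSubfield.map (ψ : Ω →+* Ω) = T.toSubfield := by
    rw [hS, hT, IntermediateField.adjoin_toSubfield, IntermediateField.adjoin_toSubfield,
      RingHom.map_field_closure]
    congr 1
    rw [Set.image_union, Set.image_singleton]
    have hrange : (ψ : Ω →+* Ω) '' Set.range (algebraMap k Ω) = Set.range (algebraMap k Ω) := by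
      ext x
      simp only [Set.mem_image, Set.mem_range]
      constructor
      · rintro ⟨_, ⟨c, rfl⟩, rfl⟩
        exact ⟨c ^ p ^ n, by rw [map_pow, RingHom.coe_coe, hψ]⟩
      · rintro ⟨c, rfl⟩
        obtain ⟨d, hd⟩ := (iterateFrobeniusEquiv k p n).surjective c
        refine ⟨algebraMap k Ω d, ⟨d, rfl⟩, ?_⟩
        rw [RingHom.coe_coe, hψ, ← map_pow, ← iterateFrobeniusEquiv_def k p n d, hd]
    rw [hrange]
    congr 1
    rw [RingHom.coe_coe, hψ, hs]
  have hmapB : B.toSubfield.map (ψ : Ω →+* Ω) = A.toSubfield := by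
    ext x
    simp only [Subfield.mem_map]
    constructor
    · rintro ⟨y, hy, rfl⟩
      obtain ⟨z, hz⟩ := (hKroot y).1 hy
      refine ⟨z, ?_⟩
      show algebraMap K Ω z = (ψ : Ω →+* Ω) y
      rw [RingHom.coe_coe, hψ]
      exact hz
    · rintro ⟨z, rfl⟩
      refine ⟨ψ.symm (algebraMap K Ω z), ?_, by rw [RingHom.coe_coe, RingEquiv.apply_symm_apply]; rfl⟩
      show ψ.symm (algebraMap K Ω z) ∈ Kroot
      refine (hKroot _).2 ⟨z, ?_⟩
      rw [← hψ, RingEquiv.apply_symm_apply]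
  have e3 : Subfield.relfinrank S.toSubfield B.toSubfield
      = Subfield.relfinrank T.toSubfield A.toSubfield := by
    rw [← hmapS, ← hmapB, Subfield.relfinrank_map_map]
  -- E4
  have e4 : Subfield.relfinrank T.toSubfield S.toSubfield = p ^ n := by
    have := aux_pow p hp hstr n
    rw [hs] at this
    exact this
  have e1' : Subfield.relfinrank T.toSubfield A.toSubfield = Module.finrank F K := e1
  -- combine
  have tower1 : Subfield.relfinrank T.toSubfield S.toSubfield
      * Subfield.relfinrank S.toSubfield B.toSubfield
      = Subfield.relfinrank T.toSubfield B.toSubfield :=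
    Subfield.relfinrank_mul_relfinrank hTS hSB
  have tower2 : Subfield.relfinrank T.toSubfield A.toSubfield
      * Subfield.relfinrank A.toSubfield B.toSubfield
      = Subfield.relfinrank T.toSubfield B.toSubfield :=
    Subfield.relfinrank_mul_relfinrank hTA hAB
  have hd0 : 0 < Module.finrank F K := Module.finrank_pos
  have key : p ^ n * Module.finrank F K
      = Module.finrank F K * Module.finrank K Kroot := by
    calc p ^ n * Module.finrank F K
        = Subfield.relfinrank T.toSubfield S.toSubfield
          * Subfield.relfinrank S.toSubfield B.toSubfield := by rw [e4, e3, e1']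
      _ = Subfield.relfinrank T.toSubfield B.toSubfield := tower1
      _ = Subfield.relfinrank T.toSubfield A.toSubfield
          * Subfield.relfinrank A.toSubfield B.toSubfield := tower2.symm
      _ = Module.finrank F K * Module.finrank K Kroot := by rw [e2, e1']
  rw [mul_comm (p ^ n)] at key
  exact (Nat.eq_of_mul_eq_mul_left hd0 key).symm
end

section
/- Let C be a smooth proper pointed curve over 𝔽_q with effective divisor 𝔪 and U the complement of Supp(𝔪), with Abel–Jacobi embedding j_𝔪 : U → J_𝔪 assumed injective (dim J_𝔪 ≥ 2). Let E be a degree-0 divisor on U coprime to 𝔪 and c the base point. Then E + c is congruent modulo P_𝔪 to an 𝔽_q-rational point of U if and only if there is exactly one effective divisor D on U with D ≡ E + c modulo P_𝔪. -/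
/-! We model the smooth proper pointed curve `C` over `𝔽_q` by its function field `K`
(over `Fq`), its set `Pt` of closed points with degrees `deg : Pt → ℕ`, and the normalized
valuations `ord x` at the points.  Divisors are finitely supported functions `Pt → ℤ`,
the degree of a divisor `D` is `∑ᶠ x, D x * deg x`, and `P_𝔪` is the group of divisors of
rational functions congruent to `1` mod `𝔪`.  `D ≡_𝔪 D'` means `D - D' ∈ P_𝔪`. -/

/-- `f ≡ 1 mod 𝔪`. -/
def congOne {K Pt : Type*} [Field K] (ord : Pt → K → ℤ) (S : Finset Pt) (𝔪 : Pt → ℕ)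
    (f : K) : Prop :=
  f = 1 ∨ ∀ x ∈ S, (𝔪 x : ℤ) ≤ ord x (f - 1)

/-- The group `P_𝔪` of divisors of rational functions congruent to `1` mod `𝔪`
(the set is genuinely a subgroup, so taking the closure does not change it). -/
def Pmod {K Pt : Type*} [Field K] (ord : Pt → K → ℤ) (S : Finset Pt) (𝔪 : Pt → ℕ) :
    AddSubgroup (Pt → ℤ) :=
  AddSubgroup.closure
    {D | ∃ f : K, f ≠ 0 ∧ congOne ord S 𝔪 f ∧ D = fun x => ord x f}



lemma support_mul_deg {Pt : Type*} (deg : Pt → ℕ) (D : Pt → ℤ) :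
    Function.support (fun x => D x * (deg x : ℤ)) ⊆ Function.support D :=
  fun x hx h => hx (by simp [h])

lemma pmod_deg {K Pt : Type*} [Field K] (ord : Pt → K → ℤ) (deg : Pt → ℕ)
    (hfin : ∀ f : K, f ≠ 0 → {x : Pt | ord x f ≠ 0}.Finite)
    (hdeg0 : ∀ f : K, f ≠ 0 → ∑ᶠ x, ord x f * (deg x : ℤ) = 0)
    (S : Finset Pt) (𝔪 : Pt → ℕ) :
    ∀ D ∈ Pmod ord S 𝔪, (Function.support D).Finite ∧ ∑ᶠ x, D x * (deg x : ℤ) = 0 := by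
  intro D hD
  refine AddSubgroup.closure_induction ?_ ?_ ?_ ?_ hD
  · rintro D ⟨f, hf0, -, rfl⟩
    exact ⟨hfin f hf0, hdeg0 f hf0⟩
  · exact ⟨by rw [Function.support_zero]; exact Set.finite_empty, by simp⟩
  · rintro A B hA hB ⟨hAf, hAd⟩ ⟨hBf, hBd⟩
    refine ⟨(hAf.union hBf).subset (Function.support_add _ _), ?_⟩
    calc ∑ᶠ x, (A + B) x * (deg x : ℤ)
        = ∑ᶠ x, (A x * (deg x : ℤ) + B x * (deg x : ℤ)) := by
          refine finsum_congr fun x => by simp [add_mul]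
      _ = (∑ᶠ x, A x * (deg x : ℤ)) + ∑ᶠ x, B x * (deg x : ℤ) :=
          finsum_add_distrib (hAf.subset (support_mul_deg deg A))
            (hBf.subset (support_mul_deg deg B))
      _ = 0 := by rw [hAd, hBd]; ring
  · rintro A hA ⟨hAf, hAd⟩
    refine ⟨hAf.subset ?_, ?_⟩
    · intro x hx
      simp only [Function.mem_support, Pi.neg_apply, ne_eq, neg_eq_zero] at hx ⊢
      exact hx
    · calc ∑ᶠ x, (-A) x * (deg x : ℤ)
          = ∑ᶠ x, -(A x * (deg x : ℤ)) := finsum_congr fun x => by simp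
        _ = -∑ᶠ x, A x * (deg x : ℤ) := finsum_neg_distrib _
        _ = 0 := by rw [hAd]; ring

lemma eff_deg_one {Pt : Type*} [DecidableEq Pt] (deg : Pt → ℕ) (hdeg_pos : ∀ x, 0 < deg x)
    (D : Pt → ℤ) (hDfin : (Function.support D).Finite) (hpos : ∀ x, 0 ≤ D x)
    (hdeg : ∑ᶠ x, D x * (deg x : ℤ) = 1) :
    ∃ d : Pt, deg d = 1 ∧ D = fun x => if x = d then 1 else 0 := by
  classical
  have hsum : ∑ x ∈ hDfin.toFinset, D x * (deg x : ℤ) = 1 := by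
    rw [← hdeg]
    exact (finsum_eq_finset_sum_of_support_subset _ (by
      intro x hx
      simp only [Set.Finite.coe_toFinset]
      exact support_mul_deg deg D hx)).symm
  have hnn : ∀ x ∈ hDfin.toFinset, 0 ≤ D x * (deg x : ℤ) :=
    fun x _ => mul_nonneg (hpos x) (by positivity)
  obtain ⟨d, hd, hdne⟩ : ∃ d ∈ hDfin.toFinset, D d * (deg d : ℤ) ≠ 0 := by
    by_contra h
    push_neg at h
    rw [Finset.sum_eq_zero h] at hsum
    exact one_ne_zero hsum.symm
  have hDd : 1 ≤ D d := by
    rcases lt_or_eq_of_le (hpos d) with h | h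
    · exact h
    · exact absurd (by rw [← h]; ring) hdne
  have hdegd : (1 : ℤ) ≤ (deg d : ℤ) := by exact_mod_cast hdeg_pos d
  have hsplit : D d * (deg d : ℤ) + ∑ x ∈ hDfin.toFinset.erase d, D x * (deg x : ℤ) = 1 := by
    simpa using (Finset.add_sum_erase _ (fun x => D x * (deg x : ℤ)) hd).trans hsum
  have hrest_nn : 0 ≤ ∑ x ∈ hDfin.toFinset.erase d, D x * (deg x : ℤ) :=
    Finset.sum_nonneg fun x hx => hnn x (Finset.mem_of_mem_erase hx)
  have hterm : D d * (deg d : ℤ) = 1 := by nlinarith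
  have hrest : ∑ x ∈ hDfin.toFinset.erase d, D x * (deg x : ℤ) = 0 := by linarith
  have hzero : ∀ x ∈ hDfin.toFinset.erase d, D x * (deg x : ℤ) = 0 :=
    (Finset.sum_eq_zero_iff_of_nonneg fun x hx => hnn x (Finset.mem_of_mem_erase hx)).mp hrest
  have hDd1 : D d = 1 := by nlinarith
  refine ⟨d, ?_, funext fun x => ?_⟩
  · have : (deg d : ℤ) = 1 := by nlinarith
    exact_mod_cast this
  · by_cases hx : x = d
    · simp [hx, hDd1]
    · simp only [if_neg hx]
      by_cases hmem : x ∈ hDfin.toFinset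
      · have := hzero x (Finset.mem_erase.mpr ⟨hx, hmem⟩)
        have hdx : (deg x : ℤ) ≠ 0 := by exact_mod_cast (hdeg_pos x).ne'
        exact (mul_eq_zero.mp this).resolve_right hdx
      · simpa using (hDfin.mem_toFinset.not.mp hmem)

/-- Let `C` be a smooth proper pointed curve over `𝔽_q` with effective
modulus `𝔪` supported on `S`, base point `c ∉ S`, `U = C ∖ S`, and Abel–Jacobi map
`j_𝔪 : U → J_𝔪` assumed injective (`dim J_𝔪 ≥ 2`).  Let `E` be a degree-0 divisor on `U`.
Then `E + c` is congruent mod `P_𝔪` to an `𝔽_q`-rational point of `U` if and only if there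
is exactly one effective divisor `D` on `U` with `D ≡_𝔪 E + c`. -/
theorem stmt12 (Fq K : Type*) [Field Fq] [Finite Fq] [Field K] [Algebra Fq K]
    (Pt : Type*) [DecidableEq Pt] (ord : Pt → K → ℤ) (deg : Pt → ℕ)
    (hdeg_pos : ∀ x, 0 < deg x)
    (hord_zero : ∀ x, ord x 0 = 0)
    (hord_mul : ∀ x (f g : K), f ≠ 0 → g ≠ 0 → ord x (f * g) = ord x f + ord x g)
    (hord_add : ∀ x (f g : K), f ≠ 0 → g ≠ 0 → f + g ≠ 0 →
      min (ord x f) (ord x g) ≤ ord x (f + g))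
    (hunif : ∀ x : Pt, ∃ u : K, ord x u = 1)
    (hfin : ∀ f : K, f ≠ 0 → {x : Pt | ord x f ≠ 0}.Finite)
    -- principal divisors have degree 0
    (hdeg0 : ∀ f : K, f ≠ 0 → ∑ᶠ x, ord x f * (deg x : ℤ) = 0)
    -- the modulus `𝔪`, supported exactly on `S`, and the base point `c`
    (S : Finset Pt) (𝔪 : Pt → ℕ) (h𝔪 : ∀ x, 0 < 𝔪 x ↔ x ∈ S)
    (c : Pt) (hc : c ∉ S) (hcdeg : deg c = 1)
    -- injectivity of the Abel–Jacobi map on rational points of `U` (from `dim J_𝔪 ≥ 2`)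
    (hAJinj : ∀ x y : Pt, deg x = 1 → deg y = 1 → x ∉ S → y ∉ S →
      (fun z => (if z = x then (1 : ℤ) else 0) - (if z = y then 1 else 0)) ∈ Pmod ord S 𝔪 →
      x = y)
    -- `E` : a degree-0 divisor supported on `U`, coprime to `𝔪`
    (E : Pt → ℤ) (hEfin : (Function.support E).Finite) (hES : ∀ x ∈ S, E x = 0)
    (hEdeg : ∑ᶠ x, E x * (deg x : ℤ) = 0) :
    (∃ d : Pt, deg d = 1 ∧ d ∉ S ∧
        (fun x => (if x = d then (1 : ℤ) else 0) - (E x + if x = c then 1 else 0)) ∈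
          Pmod ord S 𝔪) ↔
      (∃! D : Pt → ℤ,
        ((Function.support D).Finite ∧ (∀ x, 0 ≤ D x) ∧ (∀ x ∈ S, D x = 0)) ∧
        (fun x => D x - (E x + if x = c then 1 else 0)) ∈ Pmod ord S 𝔪) := by

  classical
  have hBfin : (Function.support (fun x => E x + if x = c then (1:ℤ) else 0)).Finite := by
    refine (hEfin.union (Set.finite_singleton c)).subset ?_
    intro x hx
    simp only [Function.mem_support] at hx
    by_cases h : x = c
    · exact Or.inr h
    · exact Or.inl fun h0 => hx (by simp [h, h0])
  have hBdeg : ∑ᶠ x, (E x + if x = c then (1:ℤ) else 0) * (deg x : ℤ) = 1 := by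
    have h1 : ∑ᶠ x, (if x = c then (1:ℤ) else 0) * (deg x : ℤ) = 1 := by
      rw [finsum_eq_single _ c (fun x hx => by simp [hx])]
      simp [hcdeg]
    calc ∑ᶠ x, (E x + if x = c then (1:ℤ) else 0) * (deg x : ℤ)
        = ∑ᶠ x, (E x * (deg x : ℤ) + (if x = c then (1:ℤ) else 0) * (deg x : ℤ)) :=
          finsum_congr fun x => by ring
      _ = (∑ᶠ x, E x * (deg x : ℤ)) + ∑ᶠ x, (if x = c then (1:ℤ) else 0) * (deg x : ℤ) :=
          finsum_add_distrib (hEfin.subset (support_mul_deg deg E))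
            ((Set.finite_singleton c).subset (by
              intro x hx
              simp only [Function.mem_support] at hx
              by_contra h
              simp only [Set.mem_singleton_iff] at h
              exact hx (by simp [h])))
      _ = 1 := by rw [hEdeg, h1]; ring
  have hdegD : ∀ D : Pt → ℤ,
      (fun x => D x - (E x + if x = c then (1:ℤ) else 0)) ∈ Pmod ord S 𝔪 →
      (Function.support D).Finite → ∑ᶠ x, D x * (deg x : ℤ) = 1 := by
    intro D hmem hDfin
    obtain ⟨hPf, hPd⟩ := pmod_deg ord deg hfin hdeg0 S 𝔪 _ hmem
    have hPd' : ∑ᶠ x, (D x - (E x + if x = c then (1:ℤ) else 0)) * (deg x : ℤ) = 0 := hPd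
    calc ∑ᶠ x, D x * (deg x : ℤ)
        = ∑ᶠ x, ((D x - (E x + if x = c then (1:ℤ) else 0)) * (deg x : ℤ) +
            (E x + if x = c then (1:ℤ) else 0) * (deg x : ℤ)) :=
          finsum_congr fun x => by ring
      _ = (∑ᶠ x, (D x - (E x + if x = c then (1:ℤ) else 0)) * (deg x : ℤ)) +
            ∑ᶠ x, (E x + if x = c then (1:ℤ) else 0) * (deg x : ℤ) :=
          finsum_add_distrib (hPf.subset (support_mul_deg deg _))
            (hBfin.subset (support_mul_deg deg _))
      _ = 1 := by rw [hPd', hBdeg]; ring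
  constructor
  · rintro ⟨d, hd1, hdS, hdmem⟩
    refine ⟨fun x => if x = d then (1:ℤ) else 0, ⟨⟨?_, ?_, ?_⟩, hdmem⟩, ?_⟩
    · refine (Set.finite_singleton d).subset fun x hx => ?_
      by_contra h
      simp only [Set.mem_singleton_iff] at h
      exact hx (if_neg h)
    · intro x
      dsimp only
      split <;> norm_num
    · intro x hxS
      refine if_neg fun h => hdS ?_
      rw [← h]
      exact hxS
    · rintro D' ⟨⟨hf', hpos', hS'⟩, hmem'⟩
      have hdeg' : ∑ᶠ x, D' x * (deg x : ℤ) = 1 := hdegD D' hmem' hf'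
      obtain ⟨d', hd'1, hd'eq⟩ := eff_deg_one deg hdeg_pos D' hf' hpos' hdeg'
      have hd'S : d' ∉ S := fun h => by
        have h0 := hS' d' h
        rw [hd'eq] at h0
        simp at h0
      have hsub : (fun z => (if z = d' then (1:ℤ) else 0) - (if z = d then 1 else 0)) ∈
          Pmod ord S 𝔪 := by
        have heq : (fun z => (if z = d' then (1:ℤ) else 0) - (if z = d then 1 else 0)) =
            (fun x => D' x - (E x + if x = c then (1:ℤ) else 0)) -
              (fun x => (if x = d then (1:ℤ) else 0) - (E x + if x = c then (1:ℤ) else 0)) := by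
          funext z
          simp only [Pi.sub_apply, hd'eq]
          ring
        rw [heq]
        exact sub_mem hmem' hdmem
      have hdd : d' = d := hAJinj d' d hd'1 hd1 hd'S hdS hsub
      rw [hd'eq, hdd]
  · rintro ⟨D, ⟨⟨hDf, hDpos, hDS⟩, hDmem⟩, -⟩
    have hdegD1 := hdegD D hDmem hDf
    obtain ⟨d, hd1, hdeq⟩ := eff_deg_one deg hdeg_pos D hDf hDpos hdegD1
    have hdS : d ∉ S := fun h => by
      have h0 := hDS d h
      rw [hdeq] at h0
      simp at h0
    refine ⟨d, hd1, hdS, ?_⟩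
    have heq : (fun x => (if x = d then (1:ℤ) else 0) - (E x + if x = c then (1:ℤ) else 0)) =
        (fun x => D x - (E x + if x = c then (1:ℤ) else 0)) := by
      funext x
      rw [hdeq]
    rw [heq]
    exact hDmem
end
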